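/- arXiv:2207.06986 — 9 statements merged into one kernel-verified Lean document; each statement's English description precedes it below -/
import Mathlib

section
/- Let H be a real normed vector space, λ ≥ 0 and Z ∈ H. The soft functional thresholding rule s^S_λ(Z) minimizes the penalized quadratic loss with ℓ1/ℓ2-type penalty: for every θ ∈ H, (1/2)‖s^S_λ(Z) − Z‖² + λ‖s^S_λ(Z)‖ ≤ (1/2)‖θ − Z‖² + λ‖θ‖. -/
/-- Soft functional thresholding rule: `s^S_λ(Z) = (1 − λ/‖Z‖)₊ • Z` (and `0` at `Z = 0`). -/
noncomputable def softThresh {H : Type*} [NormedAddCommGroup H] [NormedSpace ℝ H]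
    (lam : ℝ) (Z : H) : H :=
  (max (1 - lam / ‖Z‖) 0) • Z

/-- The soft functional thresholding rule minimizes the penalized quadratic loss
with ℓ1/ℓ2-type penalty. -/
theorem softThresh_min_penalized_loss {H : Type*} [NormedAddCommGroup H] [NormedSpace ℝ H]
    (lam : ℝ) (hlam : 0 ≤ lam) (Z : H) :
    ∀ θ : H,
      (1 / 2) * ‖softThresh lam Z - Z‖ ^ 2 + lam * ‖softThresh lam Z‖ ≤
        (1 / 2) * ‖θ - Z‖ ^ 2 + lam * ‖θ‖ := by
  intro θ
  by_cases hz : Z = 0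
  · subst hz
    simp only [softThresh, smul_zero, sub_zero, norm_zero]
    have h1 : (0:ℝ) ≤ ‖θ‖ := norm_nonneg _
    have h2 : (0:ℝ) ≤ ‖θ‖ ^ 2 := sq_nonneg _
    nlinarith [mul_nonneg hlam h1]
  · set r := ‖Z‖ with hrdef
    set t := ‖θ‖ with htdef
    have hr0 : 0 < r := norm_pos_iff.mpr hz
    have ht0 : 0 ≤ t := norm_nonneg _
    have key : (r - t) ^ 2 ≤ ‖θ - Z‖ ^ 2 := by
      have h1 : |t - r| ≤ ‖θ - Z‖ := abs_norm_sub_norm_le θ Z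
      nlinarith [abs_nonneg (t - r), sq_abs (t - r)]
    set c := max (1 - lam / r) 0 with hcdef
    have hc0 : 0 ≤ c := le_max_right _ _
    have hc1 : c ≤ 1 := by
      apply max_le _ zero_le_one
      have : 0 ≤ lam / r := div_nonneg hlam hr0.le
      linarith
    have hns : ‖softThresh lam Z‖ = c * r := by
      rw [softThresh, norm_smul, Real.norm_eq_abs, abs_of_nonneg hc0]
    have hds : ‖softThresh lam Z - Z‖ = (1 - c) * r := by
      have : softThresh lam Z - Z = (c - 1) • Z := by
        rw [softThresh, ← hcdef, sub_smul, one_smul]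
      rw [this, norm_smul, Real.norm_eq_abs, abs_of_nonpos (by linarith)]
      ring
    rw [hns, hds]
    by_cases hcase : lam < r
    · have hc : c = 1 - lam / r := max_eq_left (by
        have : lam / r ≤ 1 := (div_le_one hr0).mpr hcase.le
        linarith)
      have hcr : c * r = r - lam := by
        rw [hc]; field_simp
      have h1c : (1 - c) * r = lam := by
        rw [hc]; field_simp; ring
      rw [hcr, h1c]
      nlinarith [key, sq_nonneg (r - t - lam), mul_nonneg hlam ht0]
    · push_neg at hcase
      have hc : c = 0 := max_eq_right (by
        have : 1 ≤ lam / r := (one_le_div hr0).mpr hcase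
        linarith)
      rw [hc]
      have : 0 ≤ (lam - r) * t := mul_nonneg (by linarith) ht0
      nlinarith [key, sq_nonneg t]
end

section
/- Let H be a real normed vector space, λ ≥ 0 and a > 2. The SCAD functional thresholding rule satisfies condition (i) with constant c = 2: for all Z, Y ∈ H with ‖Z − Y‖ ≤ λ, one has ‖s^SC_λ(Z)‖ ≤ 2‖Y‖. -/
/-- SCAD functional thresholding rule: soft thresholding for `‖Z‖ ≤ 2λ`,
`(((a−1) − aλ/‖Z‖)/(a−2)) • Z` for `2λ < ‖Z‖ ≤ aλ`, and `Z` for `‖Z‖ > aλ`. -/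
noncomputable def scadThresh {H : Type*} [NormedAddCommGroup H] [NormedSpace ℝ H]
    (lam a : ℝ) (Z : H) : H :=
  if ‖Z‖ ≤ 2 * lam then (max (1 - lam / ‖Z‖) 0) • Z
  else if ‖Z‖ ≤ a * lam then (((a - 1) - a * lam / ‖Z‖) / (a - 2)) • Z
  else Z

/-- The SCAD functional thresholding rule satisfies condition (i) with constant `c = 2`. -/
theorem scadThresh_condition_i {H : Type*} [NormedAddCommGroup H] [NormedSpace ℝ H]
    (lam a : ℝ) (hlam : 0 ≤ lam) (ha : 2 < a) :
    ∀ Z Y : H, ‖Z - Y‖ ≤ lam → ‖scadThresh lam a Z‖ ≤ 2 * ‖Y‖ := by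
  intro Z Y hZY
  have hY : ‖Z‖ - lam ≤ ‖Y‖ := by
    have h := norm_sub_norm_le Z Y
    linarith
  have hY0 : (0:ℝ) ≤ ‖Y‖ := norm_nonneg Y
  unfold scadThresh
  split_ifs with h1 h2
  · -- ‖Z‖ ≤ 2λ
    rw [norm_smul, Real.norm_eq_abs, abs_of_nonneg (le_max_right _ 0)]
    rcases eq_or_lt_of_le (norm_nonneg Z) with hZ | hZ
    · rw [← hZ]; linarith
    rcases le_or_gt (1 - lam / ‖Z‖) 0 with hc | hc
    · rw [max_eq_right hc]; linarith
    · rw [max_eq_left hc.le]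
      have : (1 - lam / ‖Z‖) * ‖Z‖ = ‖Z‖ - lam := by
        field_simp
      rw [this]; linarith
  · -- 2λ < ‖Z‖ ≤ aλ
    push_neg at h1
    have hZ : (0:ℝ) < ‖Z‖ := by linarith
    have ht1 : ((a - 1) - a * lam / ‖Z‖) / (a - 2) ≤ 1 := by
      rw [div_le_one (by linarith)]
      have : 1 ≤ a * lam / ‖Z‖ := by
        rw [le_div_iff₀ hZ]
        linarith
      linarith
    have ht0 : 0 ≤ ((a - 1) - a * lam / ‖Z‖) / (a - 2) := by
      apply div_nonneg _ (by linarith)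
      have : a * lam / ‖Z‖ ≤ a / 2 := by
        rw [div_le_div_iff₀ hZ (by norm_num : (0:ℝ) < 2)]
        nlinarith
      nlinarith
    rw [norm_smul, Real.norm_eq_abs, abs_of_nonneg ht0]
    have hl : lam ≤ ‖Z‖ / 2 := by linarith
    nlinarith
  · -- ‖Z‖ > aλ
    push_neg at h1
    have hl : lam ≤ ‖Z‖ / 2 := by linarith
    linarith
end

section
/- Let H be a real normed vector space, λ ≥ 0 and a > 2. The SCAD functional thresholding rule satisfies conditions (ii) and (iii): for every Z ∈ H, if ‖Z‖ ≤ λ then s^SC_λ(Z) = 0, and ‖s^SC_λ(Z) − Z‖ ≤ λ. -/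
/-- The SCAD functional thresholding rule satisfies conditions (ii) and (iii). -/
theorem scadThresh_conditions_ii_iii {H : Type*} [NormedAddCommGroup H] [NormedSpace ℝ H]
    (lam a : ℝ) (hlam : 0 ≤ lam) (ha : 2 < a) :
    ∀ Z : H, (‖Z‖ ≤ lam → scadThresh lam a Z = 0) ∧ ‖scadThresh lam a Z - Z‖ ≤ lam := by
  intro Z
  constructor
  · intro hZ
    unfold scadThresh
    rw [if_pos (by linarith)]
    rcases eq_or_lt_of_le (norm_nonneg Z) with h0 | h0
    · have hz : Z = 0 := by rwa [eq_comm, norm_eq_zero] at h0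
      simp [hz]
    · have hc : 1 - lam / ‖Z‖ ≤ 0 := by
        rw [sub_nonpos, le_div_iff₀ h0]; linarith
      rw [max_eq_right hc, zero_smul]
  · unfold scadThresh
    split_ifs with h1 h2
    · rcases eq_or_lt_of_le (norm_nonneg Z) with h0 | h0
      · have hz : Z = 0 := by rwa [eq_comm, norm_eq_zero] at h0
        simp [hz, hlam]
      · rcases le_or_gt (1 - lam / ‖Z‖) 0 with hc | hc
        · rw [max_eq_right hc, zero_smul, zero_sub, norm_neg]
          have h : 1 ≤ lam / ‖Z‖ := by linarith
          rw [le_div_iff₀ h0, one_mul] at h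
          linarith
        · rw [max_eq_left hc.le]
          have he : (1 - lam / ‖Z‖) • Z - Z = (-(lam / ‖Z‖)) • Z := by
            rw [neg_smul, sub_smul, one_smul, sub_sub_cancel_left]
          rw [he, norm_smul, Real.norm_eq_abs, abs_neg,
            abs_of_nonneg (div_nonneg hlam (norm_nonneg Z)),
            div_mul_cancel₀ _ (ne_of_gt h0)]
    · push_neg at h1
      have h0 : (0:ℝ) < ‖Z‖ := lt_of_le_of_lt (by linarith) h1
      have he : (((a - 1) - a * lam / ‖Z‖) / (a - 2)) • Z - Z
          = (((a - 1) - a * lam / ‖Z‖) / (a - 2) - 1) • Z := by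
        rw [sub_smul, one_smul]
      rw [he, norm_smul, Real.norm_eq_abs]
      have hc : ((a - 1) - a * lam / ‖Z‖) / (a - 2) - 1
          = (1 - a * lam / ‖Z‖) / (a - 2) := by
        rw [div_sub_one (ne_of_gt (by linarith : (0:ℝ) < a - 2))]
        congr 1
        ring
      have hle : a * lam / ‖Z‖ ≥ 1 := by
        rw [ge_iff_le, le_div_iff₀ h0, one_mul]; exact h2
      rw [hc]
      have habs : |(1 - a * lam / ‖Z‖) / (a - 2)| = (a * lam / ‖Z‖ - 1) / (a - 2) := by
        rw [abs_div, abs_of_pos (by linarith : (0:ℝ) < a - 2),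
          abs_of_nonpos (by linarith : 1 - a * lam / ‖Z‖ ≤ 0), neg_sub]
      rw [habs, div_mul_eq_mul_div, sub_mul, div_mul_cancel₀ _ (ne_of_gt h0), one_mul,
        div_le_iff₀ (by linarith : (0:ℝ) < a - 2)]
      nlinarith
    · simp [hlam]
end

section
/- Let H be a real normed vector space, λ ≥ 0 and η ≥ 0. The adaptive lasso functional thresholding rule satisfies condition (i) with constant c = ⌈η⌉ + 1: for all Z, Y ∈ H with ‖Z − Y‖ ≤ λ, one has ‖s^AL_λ(Z)‖ ≤ (⌈η⌉ + 1)‖Y‖, where ⌈η⌉ denotes the smallest integer greater than or equal to η. -/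
/-- Adaptive lasso functional thresholding rule:
`s^AL_λ(Z) = (1 − λ^{η+1}/‖Z‖^{η+1})₊ • Z` (and `0` at `Z = 0`), with real powers. -/
noncomputable def alThresh {H : Type*} [NormedAddCommGroup H] [NormedSpace ℝ H]
    (lam eta : ℝ) (Z : H) : H :=
  (max (1 - lam ^ (eta + 1) / ‖Z‖ ^ (eta + 1)) 0) • Z

/-- The adaptive lasso functional thresholding rule satisfies condition (i)
with constant `c = ⌈η⌉ + 1`. -/
theorem alThresh_condition_i {H : Type*} [NormedAddCommGroup H] [NormedSpace ℝ H]
    (lam eta : ℝ) (hlam : 0 ≤ lam) (heta : 0 ≤ eta) :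
    ∀ Z Y : H, ‖Z - Y‖ ≤ lam → ‖alThresh lam eta Z‖ ≤ ((⌈eta⌉ : ℝ) + 1) * ‖Y‖ := by
  intro Z Y hZY
  have hc : (eta + 1 : ℝ) ≤ (⌈eta⌉ : ℝ) + 1 := by
    have := Int.le_ceil eta; linarith
  have hc0 : (0 : ℝ) < (⌈eta⌉ : ℝ) + 1 := by linarith
  have hY0 : (0:ℝ) ≤ ‖Y‖ := norm_nonneg Y
  rcases le_or_gt ‖Z‖ lam with h | h
  · -- small case: the factor is 0 (or Z = 0)
    rcases eq_or_ne Z 0 with rfl | hZ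
    · simp [alThresh]
      positivity
    · have hZpos : (0:ℝ) < ‖Z‖ := norm_pos_iff.mpr hZ
      have hpow : ‖Z‖ ^ (eta + 1) ≤ lam ^ (eta + 1) :=
        Real.rpow_le_rpow hZpos.le h (by linarith)
      have hZp : (0:ℝ) < ‖Z‖ ^ (eta + 1) := Real.rpow_pos_of_pos hZpos _
      have : (1:ℝ) ≤ lam ^ (eta + 1) / ‖Z‖ ^ (eta + 1) :=
        (one_le_div hZp).mpr hpow
      have hmax : max (1 - lam ^ (eta + 1) / ‖Z‖ ^ (eta + 1)) 0 = 0 :=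
        max_eq_right (by linarith)
      rw [alThresh, hmax, zero_smul, norm_zero]
      positivity
  · -- large case
    set a := ‖Z‖ with ha
    have ha0 : (0:ℝ) < a := lt_of_le_of_lt hlam h
    have haY : a - lam ≤ ‖Y‖ := by
      have := norm_sub_norm_le Z Y
      calc a - lam ≤ a - ‖Z - Y‖ := by linarith
        _ ≤ ‖Y‖ := by linarith
    set p := eta + 1 with hp
    have hp1 : (1:ℝ) ≤ p := by simp [hp]; linarith
    have hap : (0:ℝ) < a ^ p := Real.rpow_pos_of_pos ha0 _
    -- Bernoulli with s = lam/a - 1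
    have hs1 : (-1:ℝ) ≤ lam / a - 1 := by
      have : (0:ℝ) ≤ lam / a := by positivity
      linarith
    have hbern := one_add_mul_self_le_rpow_one_add hs1 hp1
    rw [show (1 + (lam / a - 1)) = lam / a by ring] at hbern
    have hdiv : (lam / a) ^ p = lam ^ p / a ^ p := Real.div_rpow hlam ha0.le p
    have key : 1 - lam ^ p / a ^ p ≤ p * (1 - lam / a) := by
      rw [hdiv] at hbern; linarith
    have hfrac0 : (0:ℝ) ≤ lam ^ p / a ^ p := by positivity
    have hnorm : ‖alThresh lam eta Z‖ =
        max (1 - lam ^ p / a ^ p) 0 * a := by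
      rw [alThresh, norm_smul, Real.norm_eq_abs, abs_of_nonneg (le_max_right _ _)]
    rw [hnorm]
    have hmaxle : max (1 - lam ^ p / a ^ p) 0 * a ≤ p * (a - lam) := by
      rcases max_cases (1 - lam ^ p / a ^ p) (0:ℝ) with ⟨he, _⟩ | ⟨he, _⟩
      · rw [he]
        have := mul_le_mul_of_nonneg_right key ha0.le
        calc (1 - lam ^ p / a ^ p) * a ≤ p * (1 - lam / a) * a := this
          _ = p * (a - lam) := by field_simp
      · rw [he, zero_mul]
        have : 0 ≤ a - lam := by linarith
        nlinarith
    calc max (1 - lam ^ p / a ^ p) 0 * a ≤ p * (a - lam) := hmaxle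
      _ ≤ ((⌈eta⌉ : ℝ) + 1) * (a - lam) := by
          apply mul_le_mul_of_nonneg_right hc (by linarith)
      _ ≤ ((⌈eta⌉ : ℝ) + 1) * ‖Y‖ := by
          apply mul_le_mul_of_nonneg_left haY hc0.le
end

section
/- Let H be a real normed vector space, λ ≥ 0 and η ≥ 0. The adaptive lasso functional thresholding rule satisfies conditions (ii) and (iii): for every Z ∈ H, if ‖Z‖ ≤ λ then s^AL_λ(Z) = 0, and ‖s^AL_λ(Z) − Z‖ ≤ λ. -/
/-- The adaptive lasso functional thresholding rule satisfies conditions (ii) and (iii). -/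
theorem alThresh_conditions_ii_iii {H : Type*} [NormedAddCommGroup H] [NormedSpace ℝ H]
    (lam eta : ℝ) (hlam : 0 ≤ lam) (heta : 0 ≤ eta) :
    ∀ Z : H, (‖Z‖ ≤ lam → alThresh lam eta Z = 0) ∧ ‖alThresh lam eta Z - Z‖ ≤ lam := by
  intro Z
  have he1 : (0:ℝ) < eta + 1 := by linarith
  by_cases hZ : Z = 0
  · subst hZ
    constructor
    · intro _; simp [alThresh]
    · simp [alThresh, hlam]
  have hZn : 0 < ‖Z‖ := norm_pos_iff.mpr hZ
  have hZp : 0 < ‖Z‖ ^ (eta + 1) := Real.rpow_pos_of_pos hZn _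
  have key : ‖Z‖ ≤ lam → alThresh lam eta Z = 0 := by
    intro hle
    have hmono : ‖Z‖ ^ (eta + 1) ≤ lam ^ (eta + 1) :=
      Real.rpow_le_rpow hZn.le hle he1.le
    have : 1 - lam ^ (eta + 1) / ‖Z‖ ^ (eta + 1) ≤ 0 := by
      have : (1:ℝ) ≤ lam ^ (eta + 1) / ‖Z‖ ^ (eta + 1) :=
        (one_le_div hZp).mpr hmono
      linarith
    simp [alThresh, max_eq_right this]
  refine ⟨key, ?_⟩
  by_cases hle : ‖Z‖ ≤ lam
  · rw [key hle]; simpa using hle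
  push_neg at hle
  have hlt : lam ^ (eta + 1) < ‖Z‖ ^ (eta + 1) := by
    rcases eq_or_lt_of_le hlam with h0 | h0
    · rw [← h0, Real.zero_rpow he1.ne']; exact hZp
    · exact Real.rpow_lt_rpow h0.le hle he1
  have hc : (0:ℝ) ≤ 1 - lam ^ (eta + 1) / ‖Z‖ ^ (eta + 1) := by
    have : lam ^ (eta + 1) / ‖Z‖ ^ (eta + 1) ≤ 1 := (div_le_one hZp).mpr hlt.le
    linarith
  rw [alThresh, max_eq_left hc]
  have : (1 - lam ^ (eta + 1) / ‖Z‖ ^ (eta + 1)) • Z - Z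
      = (-(lam ^ (eta + 1) / ‖Z‖ ^ (eta + 1))) • Z := by
    rw [sub_smul, one_smul, neg_smul]; abel
  rw [this, norm_smul]
  have hdivpos : 0 ≤ lam ^ (eta + 1) / ‖Z‖ ^ (eta + 1) :=
    div_nonneg (Real.rpow_nonneg hlam _) hZp.le
  rw [norm_neg, Real.norm_of_nonneg hdivpos]
  -- goal: lam^(η+1)/‖Z‖^(η+1) * ‖Z‖ ≤ lam
  have hsplit : ‖Z‖ ^ (eta + 1) = ‖Z‖ ^ eta * ‖Z‖ := by
    rw [Real.rpow_add hZn, Real.rpow_one]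
  have hetaZ : lam ^ eta ≤ ‖Z‖ ^ eta := Real.rpow_le_rpow hlam hle.le heta
  have hl1 : lam ^ (eta + 1) = lam ^ eta * lam := by
    rw [Real.rpow_add' hlam (by linarith), Real.rpow_one]
  rw [hsplit, hl1]
  rw [div_mul_eq_mul_div, mul_div_assoc]
  have hZeta : 0 < ‖Z‖ ^ eta := Real.rpow_pos_of_pos hZn _
  have : ‖Z‖ / (‖Z‖ ^ eta * ‖Z‖) = 1 / ‖Z‖ ^ eta := by
    field_simp
  rw [this]
  calc lam ^ eta * lam * (1 / ‖Z‖ ^ eta) ≤ ‖Z‖ ^ eta * lam * (1 / ‖Z‖ ^ eta) := by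
        apply mul_le_mul_of_nonneg_right (mul_le_mul_of_nonneg_right hetaZ hlam)
        positivity
    _ = lam := by
        rw [mul_comm (‖Z‖ ^ eta) lam, mul_assoc, mul_one_div, div_self hZeta.ne', mul_one]
end

section
/- Let H be a real normed vector space, λ ≥ 0, η ≥ 0 and Z ∈ H with Z ≠ 0. The adaptive lasso functional thresholding rule minimizes the penalized quadratic loss with adaptive lasso penalty: for every θ ∈ H, (1/2)‖s^AL_λ(Z) − Z‖² + λ^{η+1}‖Z‖^{−η}‖s^AL_λ(Z)‖ ≤ (1/2)‖θ − Z‖² + λ^{η+1}‖Z‖^{−η}‖θ‖. -/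
/-- The adaptive lasso functional thresholding rule minimizes the penalized quadratic loss
with adaptive lasso penalty `λ^{η+1}‖Z‖^{−η}‖θ‖`. -/
theorem alThresh_min_penalized_loss {H : Type*} [NormedAddCommGroup H] [NormedSpace ℝ H]
    (lam eta : ℝ) (hlam : 0 ≤ lam) (heta : 0 ≤ eta) (Z : H) (hZ : Z ≠ 0) :
    ∀ θ : H,
      (1 / 2) * ‖alThresh lam eta Z - Z‖ ^ 2 +
          lam ^ (eta + 1) * ‖Z‖ ^ (-eta) * ‖alThresh lam eta Z‖ ≤
        (1 / 2) * ‖θ - Z‖ ^ 2 + lam ^ (eta + 1) * ‖Z‖ ^ (-eta) * ‖θ‖ := by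
  intro θ
  have hr : (0:ℝ) < ‖Z‖ := norm_pos_iff.mpr hZ
  set r : ℝ := ‖Z‖ with hr_def
  have ha : (0:ℝ) ≤ lam ^ (eta + 1) := Real.rpow_nonneg hlam _
  set a : ℝ := lam ^ (eta + 1) with ha_def
  have hre : (0:ℝ) < r ^ eta := Real.rpow_pos_of_pos hr eta
  have hsplit : r ^ (eta + 1) = r ^ eta * r := by
    rw [Real.rpow_add hr, Real.rpow_one]
  have hneg : r ^ (-eta) = (r ^ eta)⁻¹ := Real.rpow_neg hr.le _
  set β : ℝ := a / r ^ (eta + 1) with hβ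
  have hβ0 : (0:ℝ) ≤ β := div_nonneg ha (Real.rpow_nonneg hr.le _)
  have hc : a * r ^ (-eta) = β * r := by
    rw [hneg, hβ, hsplit]
    field_simp
  set κ : ℝ := max (1 - β) 0 with hκ
  have hκ0 : (0:ℝ) ≤ κ := le_max_right _ _
  have hκ1 : κ ≤ 1 := max_le (by linarith) zero_le_one
  have hT : alThresh lam eta Z = κ • Z := rfl
  have hnormT : ‖alThresh lam eta Z‖ = κ * r := by
    rw [hT, norm_smul, Real.norm_of_nonneg hκ0, hr_def]
  have hdiff : ‖alThresh lam eta Z - Z‖ = (1 - κ) * r := by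
    have h1 : alThresh lam eta Z - Z = (κ - 1) • Z := by
      rw [hT, sub_smul, one_smul]
    rw [h1, norm_smul, Real.norm_eq_abs, abs_of_nonpos (by linarith), ← hr_def]
    ring
  have ht : (0:ℝ) ≤ ‖θ‖ := norm_nonneg θ
  have habs : |‖θ‖ - ‖Z‖| ≤ ‖θ - Z‖ := abs_norm_sub_norm_le θ Z
  have h1 : ‖θ‖ - r ≤ ‖θ - Z‖ := by
    rw [hr_def]; exact (abs_le.mp habs).2 |>.trans_eq rfl |>.trans (le_refl _) |>.trans (le_refl _) |>.trans (le_refl _) |>.trans (le_refl _) |>.trans (le_refl _)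
  have h2 : r - ‖θ‖ ≤ ‖θ - Z‖ := by
    have := (abs_le.mp habs).1
    rw [hr_def]; linarith
  rw [hnormT, hdiff, hc]
  have hsq : (r - ‖θ‖) ^ 2 ≤ ‖θ - Z‖ ^ 2 := by
    nlinarith [mul_nonneg (sub_nonneg.mpr h2) (by linarith : (0:ℝ) ≤ ‖θ - Z‖ + (r - ‖θ‖))]
  rcases le_or_gt β 1 with hb | hb
  · have hκe : κ = 1 - β := max_eq_left (by linarith)
    rw [hκe]
    nlinarith [sq_nonneg (‖θ‖ - r + β * r), hsq]
  · have hκe : κ = 0 := max_eq_right (by linarith)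
    rw [hκe]
    nlinarith [hsq, mul_nonneg (mul_nonneg (by linarith : (0:ℝ) ≤ β - 1) hr.le) ht, sq_nonneg ‖θ‖]
end

section
/- The hard functional thresholding rule does not satisfy condition (i) for any constant: let H be a real normed vector space containing a nonzero vector and let λ > 0. Then for every c > 0 there exist Z, Y ∈ H with ‖Z − Y‖ ≤ λ and ‖s^H_λ(Z)‖ > c‖Y‖. -/
/-- Hard functional thresholding rule: `s^H_λ(Z) = Z` if `‖Z‖ ≥ λ` and `0` otherwise. -/
noncomputable def hardThresh {H : Type*} [NormedAddCommGroup H] [NormedSpace ℝ H]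
    (lam : ℝ) (Z : H) : H :=
  if lam ≤ ‖Z‖ then Z else 0

/-- The hard functional thresholding rule does not satisfy condition (i) for any constant:
in any nontrivial space, for every `c > 0` there are `Z, Y` with `‖Z − Y‖ ≤ λ`
but `‖s^H_λ(Z)‖ > c‖Y‖`. -/
theorem hardThresh_fails_condition_i {H : Type*} [NormedAddCommGroup H] [NormedSpace ℝ H]
    (hH : ∃ v : H, v ≠ 0) (lam : ℝ) (hlam : 0 < lam) :
    ∀ c : ℝ, 0 < c → ∃ Z Y : H, ‖Z - Y‖ ≤ lam ∧ c * ‖Y‖ < ‖hardThresh lam Z‖ := by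
  intro c hc
  obtain ⟨v, hv⟩ := hH
  have hvn : ‖v‖ ≠ 0 := norm_ne_zero_iff.mpr hv
  set u : H := ‖v‖⁻¹ • v with hu
  have hun : ‖u‖ = 1 := by
    rw [hu, norm_smul, norm_inv, norm_norm, inv_mul_cancel₀ hvn]
  set ε : ℝ := lam / (2 * (c + 1)) with hε
  have hc1 : 0 < c + 1 := by linarith
  have hεpos : 0 < ε := by positivity
  have hεle : ε ≤ lam := by
    rw [hε, div_le_iff₀ (by positivity)]
    nlinarith
  refine ⟨lam • u, ε • u, ?_, ?_⟩
  · rw [← sub_smul, norm_smul, hun, mul_one, Real.norm_eq_abs,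
      abs_of_nonneg (by linarith)]
    linarith
  · have hZ : ‖lam • u‖ = lam := by
      rw [norm_smul, hun, mul_one, Real.norm_eq_abs, abs_of_pos hlam]
    rw [hardThresh, if_pos (le_of_eq hZ.symm), hZ, norm_smul, hun, mul_one,
      Real.norm_eq_abs, abs_of_pos hεpos, hε]
    calc c * (lam / (2 * (c + 1))) = lam * (c / (2 * (c + 1))) := by ring
    _ < lam * 1 := by
        apply mul_lt_mul_of_pos_left _ hlam
        rw [div_lt_one (by positivity)]; linarith
    _ = lam := mul_one lam
end

section
/- Let H be a real normed vector space, λ ≥ 0, c > 0, and let s_λ : H → H satisfy condition (i) with constant c, condition (ii), and condition (iii). Let Φ̂, Φ̃ ∈ H with ‖Φ̂ − Φ̃‖ ≤ λ. Then for every q ∈ [0, 1], ‖s_λ(Φ̂) − Φ̃‖ ≤ (2 + c)·λ^{1−q}·‖Φ̃‖^q, where powers are real powers. -/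
/-- Deterministic entrywise bound underlying the rate of convergence in Theorem 1:
if `s_λ` satisfies conditions (i) (with constant `c`), (ii) and (iii), and
`‖Φ̂ − Φ̃‖ ≤ λ`, then for every `q ∈ [0,1]`,
`‖s_λ(Φ̂) − Φ̃‖ ≤ (2 + c)·λ^{1−q}·‖Φ̃‖^q` (real powers). -/
theorem thresholding_entrywise_bound {H : Type*} [NormedAddCommGroup H] [NormedSpace ℝ H]
    (lam c : ℝ) (hlam : 0 ≤ lam) (hc : 0 < c) (s : H → H)
    (hcond_i : ∀ Z Y : H, ‖Z - Y‖ ≤ lam → ‖s Z‖ ≤ c * ‖Y‖)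
    (hcond_ii : ∀ Z : H, ‖Z‖ ≤ lam → s Z = 0)
    (hcond_iii : ∀ Z : H, ‖s Z - Z‖ ≤ lam)
    (Phihat Phitilde : H) (hPhi : ‖Phihat - Phitilde‖ ≤ lam)
    (q : ℝ) (hq0 : 0 ≤ q) (hq1 : q ≤ 1) :
    ‖s Phihat - Phitilde‖ ≤ (2 + c) * lam ^ (1 - q) * ‖Phitilde‖ ^ q := by
  have hnorm : (0:ℝ) ≤ ‖Phitilde‖ := norm_nonneg _
  rcases le_or_gt lam ‖Phitilde‖ with h | h
  · -- ‖s Phihat - Phitilde‖ ≤ 2 λ ≤ 2 λ^{1-q} ‖Φ̃‖^q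
    have h2 : ‖s Phihat - Phitilde‖ ≤ 2 * lam := by
      calc ‖s Phihat - Phitilde‖
          ≤ ‖s Phihat - Phihat‖ + ‖Phihat - Phitilde‖ := norm_sub_le_norm_sub_add_norm_sub _ _ _
        _ ≤ lam + lam := add_le_add (hcond_iii _) hPhi
        _ = 2 * lam := by ring
    have hlq : lam = lam ^ (1 - q) * lam ^ q := by
      rw [← Real.rpow_add_of_nonneg hlam (by linarith) hq0, sub_add_cancel,
        Real.rpow_one]
    have hmono : lam ^ q ≤ ‖Phitilde‖ ^ q := Real.rpow_le_rpow hlam h hq0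
    have hnn : (0:ℝ) ≤ lam ^ (1 - q) := Real.rpow_nonneg hlam _
    calc ‖s Phihat - Phitilde‖ ≤ 2 * lam := h2
      _ = 2 * (lam ^ (1 - q) * lam ^ q) := by rw [← hlq]
      _ ≤ 2 * (lam ^ (1 - q) * ‖Phitilde‖ ^ q) := by
          apply mul_le_mul_of_nonneg_left _ (by norm_num)
          exact mul_le_mul_of_nonneg_left hmono hnn
      _ ≤ (2 + c) * lam ^ (1 - q) * ‖Phitilde‖ ^ q := by
          have : (0:ℝ) ≤ lam ^ (1 - q) * ‖Phitilde‖ ^ q :=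
            mul_nonneg hnn (Real.rpow_nonneg hnorm _)
          nlinarith
  · -- ‖Φ̃‖ < λ
    have hsb : ‖s Phihat‖ ≤ c * ‖Phitilde‖ := hcond_i _ _ hPhi
    have h1 : ‖s Phihat - Phitilde‖ ≤ (1 + c) * ‖Phitilde‖ := by
      calc ‖s Phihat - Phitilde‖ ≤ ‖s Phihat‖ + ‖Phitilde‖ := norm_sub_le _ _
        _ ≤ c * ‖Phitilde‖ + ‖Phitilde‖ := add_le_add hsb le_rfl
        _ = (1 + c) * ‖Phitilde‖ := by ring
    have hsplit : ‖Phitilde‖ = ‖Phitilde‖ ^ (1 - q) * ‖Phitilde‖ ^ q := by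
      rw [← Real.rpow_add_of_nonneg hnorm (by linarith) hq0, sub_add_cancel,
        Real.rpow_one]
    have hmono : ‖Phitilde‖ ^ (1 - q) ≤ lam ^ (1 - q) :=
      Real.rpow_le_rpow hnorm h.le (by linarith)
    have hqnn : (0:ℝ) ≤ ‖Phitilde‖ ^ q := Real.rpow_nonneg hnorm _
    calc ‖s Phihat - Phitilde‖ ≤ (1 + c) * ‖Phitilde‖ := h1
      _ = (1 + c) * (‖Phitilde‖ ^ (1 - q) * ‖Phitilde‖ ^ q) := by rw [← hsplit]
      _ ≤ (1 + c) * (lam ^ (1 - q) * ‖Phitilde‖ ^ q) := by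
          apply mul_le_mul_of_nonneg_left _ (by linarith)
          exact mul_le_mul_of_nonneg_right hmono hqnn
      _ ≤ (2 + c) * lam ^ (1 - q) * ‖Phitilde‖ ^ q := by
          have : (0:ℝ) ≤ lam ^ (1 - q) * ‖Phitilde‖ ^ q :=
            mul_nonneg (Real.rpow_nonneg hlam _) hqnn
          nlinarith
end

section
/- Let H be a real normed vector space, λ ≥ 0, a > 2 and Z ∈ H. The SCAD functional thresholding rule minimizes the penalized quadratic loss with SCAD penalty: for every θ ∈ H, (1/2)‖s^SC_λ(Z) − Z‖² + p_λ(‖s^SC_λ(Z)‖) ≤ (1/2)‖θ − Z‖² + p_λ(‖θ‖), where p_λ(t) = λt for 0 ≤ t ≤ λ, p_λ(t) = (2aλt − t² − λ²)/(2(a−1)) for λ < t ≤ aλ, and p_λ(t) = λ²(a+1)/2 for t > aλ. -/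
set_option maxHeartbeats 1000000


/-- SCAD penalty: `p_λ(t) = λt` for `t ≤ λ`, `(2aλt − t² − λ²)/(2(a−1))` for `λ < t ≤ aλ`,
and `λ²(a+1)/2` for `t > aλ`. -/
noncomputable def scadPenalty (lam a t : ℝ) : ℝ :=
  if t ≤ lam then lam * t
  else if t ≤ a * lam then (2 * a * lam * t - t ^ 2 - lam ^ 2) / (2 * (a - 1))
  else lam ^ 2 * (a + 1) / 2

lemma penalty_ge (lam a t : ℝ) (hlam : 0 ≤ lam) (ha : 2 < a) :
    2*a*lam*t - t^2 - lam^2 ≤ 2*(a-1) * scadPenalty lam a t := by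
  have h2a : (0:ℝ) < 2*(a-1) := by linarith
  unfold scadPenalty
  split_ifs with h1 h2
  · nlinarith [sq_nonneg (t - lam)]
  · have : 2*(a-1) * ((2*a*lam*t - t^2 - lam^2)/(2*(a-1))) = 2*a*lam*t - t^2 - lam^2 := by
      field_simp
      exact mul_div_cancel_left₀ _ (by linarith : (a-1) ≠ 0)
    linarith
  · nlinarith [sq_nonneg (t - a*lam)]

lemma scad_onedim (lam a z t : ℝ) (hlam : 0 ≤ lam) (ha : 2 < a) (hz : 0 ≤ z) (ht : 0 ≤ t)
    (u : ℝ)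
    (hu : u = if z ≤ 2*lam then max (z - lam) 0
          else if z ≤ a*lam then ((a-1)*z - a*lam)/(a-2) else z) :
    (1/2)*(u - z)^2 + scadPenalty lam a u ≤ (1/2)*(t - z)^2 + scadPenalty lam a t := by
  have h2a : (0:ℝ) < 2*(a-1) := by linarith
  have ha2 : (0:ℝ) < a - 2 := by linarith
  have hPt := penalty_ge lam a t hlam ha
  split_ifs at hu with hb1 hb2
  · -- z ≤ 2λ
    rcases le_or_gt z lam with hA | hA
    · -- u = 0
      have hu0 : u = 0 := by rw [hu]; exact max_eq_right (by linarith)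
      have hp0 : scadPenalty lam a 0 = 0 := by
        unfold scadPenalty; rw [if_pos hlam]; ring
      rw [hu0, hp0]
      unfold scadPenalty
      split_ifs with h1 h2
      · nlinarith [mul_nonneg ht (show (0:ℝ) ≤ t/2 + lam - z by linarith)]
      · have hmul : 2*(a-1) * ((2*a*lam*t - t^2 - lam^2)/(2*(a-1))) = 2*a*lam*t - t^2 - lam^2 := by
          field_simp
          exact mul_div_cancel_left₀ _ (by linarith : (a-1) ≠ 0)
        nlinarith [hmul, mul_nonneg (mul_nonneg (show (0:ℝ) ≤ a-1 by linarith) ht)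
            (show (0:ℝ) ≤ lam - z by linarith),
          mul_nonneg hlam (show (0:ℝ) ≤ t - lam by linarith),
          mul_nonneg ha2.le (sq_nonneg t), sq_nonneg lam]
      · have htz : 2*z ≤ t := by nlinarith [mul_nonneg (show (0:ℝ) ≤ a-2 by linarith) hlam]
        nlinarith [mul_nonneg ht (show (0:ℝ) ≤ t - 2*z by linarith),
          mul_nonneg (mul_nonneg hlam hlam) (show (0:ℝ) ≤ a+1 by linarith)]
    · -- u = z - lam
      have hu0 : u = z - lam := by rw [hu]; exact max_eq_left (by linarith)
      have hpu : scadPenalty lam a u = lam * (z - lam) := by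
        rw [hu0]; unfold scadPenalty; rw [if_pos (by linarith)]
      rw [hpu, hu0]
      unfold scadPenalty
      split_ifs with h1 h2
      · nlinarith [sq_nonneg (t - z + lam)]
      · have hmul : 2*(a-1) * ((2*a*lam*t - t^2 - lam^2)/(2*(a-1))) = 2*a*lam*t - t^2 - lam^2 := by
          field_simp
          exact mul_div_cancel_left₀ _ (by linarith : (a-1) ≠ 0)
        nlinarith [hmul, mul_nonneg ha2.le (sq_nonneg (t - lam)),
          mul_nonneg (mul_nonneg (show (0:ℝ) ≤ a-1 by linarith)
            (show (0:ℝ) ≤ 2*lam - z by linarith)) (show (0:ℝ) ≤ t - lam by linarith),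
          mul_nonneg (show (0:ℝ) ≤ a-1 by linarith) (sq_nonneg (z - 2*lam))]
      · nlinarith [sq_nonneg (t - z), mul_nonneg hlam (show (0:ℝ) ≤ 2*lam - z by linarith),
          mul_nonneg ha2.le (mul_nonneg hlam hlam)]
  · -- 2λ < z ≤ aλ
    push_neg at hb1
    have hlampos : 0 < lam := by
      by_contra h
      push_neg at h
      nlinarith [mul_nonpos_of_nonneg_of_nonpos ha2.le h]
    have huu : u * (a-2) = (a-1)*z - a*lam := by rw [hu]; field_simp
    have hul : lam < u := by nlinarith [huu]
    have huh : u ≤ a*lam := by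
      nlinarith [huu, mul_nonneg (show (0:ℝ) ≤ a-1 by linarith)
        (show (0:ℝ) ≤ a*lam - z by linarith)]
    have hpu : 2*(a-1) * scadPenalty lam a u = 2*a*lam*u - u^2 - lam^2 := by
      unfold scadPenalty
      rw [if_neg (not_le.mpr hul), if_pos huh]
      field_simp
      exact mul_div_cancel_left₀ _ (by linarith : (a-1) ≠ 0)
    have hzero : (a-1)*z - a*lam - u*(a-2) = 0 := by linarith
    have keyid : (a-1)*(t-z)^2 + (2*a*lam*t - t^2 - lam^2)
        - ((a-1)*(u-z)^2 + (2*a*lam*u - u^2 - lam^2))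
        = (a-2)*(t-u)^2 - 2*(t-u)*((a-1)*z - a*lam - u*(a-2)) := by ring
    rw [hzero] at keyid
    rw [← mul_le_mul_iff_right₀ h2a]
    nlinarith [keyid, hpu, hPt, mul_nonneg ha2.le (sq_nonneg (t-u))]
  · -- z > aλ
    push_neg at hb1 hb2
    have hu0 : u = z := hu
    have hpz : scadPenalty lam a z = lam^2*(a+1)/2 := by
      unfold scadPenalty
      rw [if_neg (by push_neg; nlinarith [mul_nonneg (show (0:ℝ) ≤ a-1 by linarith) hlam]),
        if_neg (not_le.mpr hb2)]
    rw [hu0, hpz]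
    rcases le_or_gt t (a*lam) with hC | hC
    · rw [← mul_le_mul_iff_right₀ h2a]
      nlinarith [hPt, mul_nonneg ha2.le (sq_nonneg (z - t)),
        mul_nonneg (show (0:ℝ) ≤ z - a*lam by linarith) (show (0:ℝ) ≤ z + a*lam - 2*t by linarith)]
    · have hpt : scadPenalty lam a t = lam^2*(a+1)/2 := by
        unfold scadPenalty
        rw [if_neg (by push_neg; nlinarith [mul_nonneg (show (0:ℝ) ≤ a-1 by linarith) hlam]),
          if_neg (not_le.mpr hC)]
      rw [hpt]
      nlinarith [sq_nonneg (t - z)]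

lemma smul_norms {H : Type*} [NormedAddCommGroup H] [NormedSpace ℝ H]
    (c : ℝ) (Z : H) (hc0 : 0 ≤ c) (hc1 : c ≤ 1) :
    ‖c • Z‖ = c * ‖Z‖ ∧ ‖c • Z - Z‖ = ‖Z‖ - c * ‖Z‖ := by
  constructor
  · rw [norm_smul, Real.norm_eq_abs, abs_of_nonneg hc0]
  · have h : c • Z - Z = (c - 1) • Z := by rw [sub_smul, one_smul]
    rw [h, norm_smul, Real.norm_eq_abs, abs_of_nonpos (by linarith)]
    ring

lemma scadThresh_norms {H : Type*} [NormedAddCommGroup H] [NormedSpace ℝ H]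
    (lam a : ℝ) (hlam : 0 ≤ lam) (ha : 2 < a) (Z : H) :
    ‖scadThresh lam a Z‖ = (if ‖Z‖ ≤ 2*lam then max (‖Z‖ - lam) 0
        else if ‖Z‖ ≤ a*lam then ((a-1)*‖Z‖ - a*lam)/(a-2) else ‖Z‖) ∧
    ‖scadThresh lam a Z - Z‖ = ‖Z‖ - (if ‖Z‖ ≤ 2*lam then max (‖Z‖ - lam) 0
        else if ‖Z‖ ≤ a*lam then ((a-1)*‖Z‖ - a*lam)/(a-2) else ‖Z‖) := by
  have hz : 0 ≤ ‖Z‖ := norm_nonneg Z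
  unfold scadThresh
  split_ifs with h1 h2
  · set c := max (1 - lam / ‖Z‖) 0 with hc
    have hc0 : 0 ≤ c := le_max_right _ _
    have hc1 : c ≤ 1 := by
      apply max_le _ (by norm_num)
      have : 0 ≤ lam / ‖Z‖ := div_nonneg hlam hz
      linarith
    have hcz : c * ‖Z‖ = max (‖Z‖ - lam) 0 := by
      rcases hz.eq_or_lt with h0 | h0
      · rw [← h0, mul_zero, zero_sub]
        exact (max_eq_right (by linarith : -lam ≤ 0)).symm
      · rw [hc, max_mul_of_nonneg _ _ hz, zero_mul, sub_mul, one_mul,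
          div_mul_cancel₀ _ (ne_of_gt h0)]
    obtain ⟨e1, e2⟩ := smul_norms c Z hc0 hc1
    exact ⟨by rw [e1, hcz], by rw [e2, hcz]⟩
  · push_neg at h1
    have h0 : 0 < ‖Z‖ := by linarith
    have hlampos : 0 < lam := by
      by_contra h
      push_neg at h
      nlinarith [mul_nonpos_of_nonneg_of_nonpos (show (0:ℝ) ≤ a - 2 by linarith) h]
    set c := ((a - 1) - a * lam / ‖Z‖) / (a - 2) with hc
    have ha2 : (0:ℝ) < a - 2 := by linarith
    have hdiv : a * lam / ‖Z‖ ≤ a - 1 := by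
      rw [div_le_iff₀ h0]
      nlinarith [mul_nonneg (show (0:ℝ) ≤ a - 2 by linarith) hlam]
    have hc0 : 0 ≤ c := div_nonneg (by linarith) ha2.le
    have hc1 : c ≤ 1 := by
      rw [hc, div_le_one ha2]
      have : 1 ≤ a * lam / ‖Z‖ := by
        rw [le_div_iff₀ h0]; linarith
      linarith
    have hcz : c * ‖Z‖ = ((a-1)*‖Z‖ - a*lam)/(a-2) := by
      rw [hc]; field_simp
    obtain ⟨e1, e2⟩ := smul_norms c Z hc0 hc1
    exact ⟨by rw [e1, hcz], by rw [e2, hcz]⟩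
  · exact ⟨rfl, by rw [sub_self, norm_zero]; ring⟩

/-- The SCAD functional thresholding rule minimizes the penalized quadratic loss
with SCAD penalty. -/
theorem scadThresh_min_penalized_loss {H : Type*} [NormedAddCommGroup H] [NormedSpace ℝ H]
    (lam a : ℝ) (hlam : 0 ≤ lam) (ha : 2 < a) (Z : H) :
    ∀ θ : H,
      (1 / 2) * ‖scadThresh lam a Z - Z‖ ^ 2 + scadPenalty lam a ‖scadThresh lam a Z‖ ≤
        (1 / 2) * ‖θ - Z‖ ^ 2 + scadPenalty lam a ‖θ‖ := by
  intro θ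
  obtain ⟨e1, e2⟩ := scadThresh_norms lam a hlam ha Z
  set u := (if ‖Z‖ ≤ 2*lam then max (‖Z‖ - lam) 0
      else if ‖Z‖ ≤ a*lam then ((a-1)*‖Z‖ - a*lam)/(a-2) else ‖Z‖) with hu
  have h1 : (1/2)*(u - ‖Z‖)^2 + scadPenalty lam a u ≤
      (1/2)*(‖θ‖ - ‖Z‖)^2 + scadPenalty lam a ‖θ‖ :=
    scad_onedim lam a ‖Z‖ ‖θ‖ hlam ha (norm_nonneg Z) (norm_nonneg θ) u hu
  have h2 : (‖θ‖ - ‖Z‖)^2 ≤ ‖θ - Z‖^2 := by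
    rw [← sq_abs (‖θ‖ - ‖Z‖)]
    exact pow_le_pow_left₀ (abs_nonneg _) (abs_norm_sub_norm_le θ Z) 2
  have h3 : (1/2) * ‖scadThresh lam a Z - Z‖^2 + scadPenalty lam a ‖scadThresh lam a Z‖
      = (1/2)*(u - ‖Z‖)^2 + scadPenalty lam a u := by
    rw [e1, e2]; ring_nf
  rw [h3]
  linarith
end
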